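/- Let d, m ≥ 1 be integers, T > 0, and let l₁,…,l_m ∈ ℤ^d satisfy l_k = e_k (standard basis) for k = 1,…,d and {l₁,…,l_m} = {−l₁,…,−l_m}. Let a₁,…,a_m, b₁,…,b_d, c be bounded real-valued functions on ℝ × ℝ^d with a_k ≥ 0 everywhere, and let A, B, C₀ bound sup|a_k|, sup|b_k|, sup|c| respectively. There exists h₀ > 0, depending only on d, m, A, B, C₀ and max_k ‖l_k‖, such that the following holds for every h ∈ (0, h₀]. Let Q^o ⊆ (0,T) × hℤ^d be such that for each x the section Q^o_{|x} = {t : (t,x) ∈ Q^o} is open; let Q̂^o be the set of (t₀, x₀) ∈ (0,T] × hℤ^d for which there is a sequence t_n ↑ t₀ with (t_n, x₀) ∈ Q^o; let Q = Q̂^o ∪ {(t, x + h l_k) : (t,x) ∈ Q^o, k = 1,…,m}. Assume h·max(−b_k(t,x), 0) ≤ a_k(t,x) for all k = 1,…,d and all (t,x). Let η be a bounded function on Q^o and let v be a bounded real function on Q such that: (i) for every x, v(·, x) is Borel measurable on Q_{|x}, continuous on Q^o_{|x}, and for every compact interval [s,t] ⊆ Q^o_{|x}: v(t,x) − v(s,x)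 = −∫_s^t [ Σ_{k=1}^m a_k Δ_{h,l_k} v + Σ_{k=1}^d b_k δ_{h,l_k} v − c v + η ](r, x) dr; (ii) for every (t,x) ∈ Q̂^o \ Q^o, v(t,x) = limsup of v(s,x) as s ↑ t with (s,x) ∈ Q^o. Then for all (t,x) ∈ Q^o: v(t,x) ≤ T e^{c̄T} · sup_{Q^o} η⁺ + e^{c̄T} · sup_{Q∖Q^o} v⁺, where c̄ = sup max(−c, 0), a⁺ = max(a,0), and suprema over empty sets are taken to be 0. -/

import Mathlib

open scoped BigOperators
open MeasureTheory

noncomputable section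

/-- First-order finite difference `δ_{h,l}φ(x) = h⁻¹(φ(x+hl) − φ(x))`. -/
def deltaOp (d : ℕ) (h : ℝ) (l : Fin d → ℝ)
    (φ : (Fin d → ℝ) → ℝ) (x : Fin d → ℝ) : ℝ :=
  (φ (x + h • l) - φ x) / h

/-- Second-order finite difference
`Δ_{h,l}φ(x) = h⁻²(φ(x+hl) − 2φ(x) + φ(x−hl))`. -/
def DeltaOp (d : ℕ) (h : ℝ) (l : Fin d → ℝ)
    (φ : (Fin d → ℝ) → ℝ) (x : Fin d → ℝ) : ℝ :=
  (φ (x + h • l) - 2 * φ x + φ (x - h • l)) / h ^ 2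

open Set in
lemma parts_aux {s t : ℝ} (hst : s ≤ t) {F V θ θ' : ℝ → ℝ}
    (hθ : ∀ r, HasDerivAt θ (θ' r) r) (hθc : Continuous θ')
    (hF : IntervalIntegrable F volume s t)
    (hV : ∀ r ∈ Set.Icc s t, V r = V s - ∫ q in s..r, F q) :
    θ t * V t - θ s * V s = ∫ r in s..t, (θ' r * V r - θ r * F r) := by
  have hFi : IntegrableOn F (Set.Ioc s t) volume :=
    (intervalIntegrable_iff_integrableOn_Ioc_of_le hst).1 hF
  set μ := volume.restrict (Set.Ioc s t) with hμ
  have hθ'i : Integrable θ' μ := hθc.integrableOn_Ioc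
  have hFμ : Integrable F μ := hFi
  -- FTC for θ'
  have hθFTC : ∀ p q : ℝ, ∫ r in p..q, θ' r = θ q - θ p := by
    intro p q
    exact intervalIntegral.integral_eq_sub_of_hasDerivAt (fun x _ => hθ x)
      (hθc.intervalIntegrable p q)
  -- key Fubini identity
  have key : ∫ r in s..t, θ' r * (∫ q in s..r, F q) = ∫ q in s..t, (θ t - θ q) * F q := by
    rw [intervalIntegral.integral_of_le hst, intervalIntegral.integral_of_le hst]
    have hmeas : MeasurableSet {z : ℝ × ℝ | z.2 ≤ z.1} :=
      (isClosed_le continuous_snd continuous_fst).measurableSet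
    have hint : Integrable (Function.uncurry (fun r q : ℝ =>
        θ' r * Set.indicator (Set.Iic r) F q)) (μ.prod μ) := by
      have h1 : Integrable (fun z : ℝ × ℝ => θ' z.1 * F z.2) (μ.prod μ) :=
        Integrable.mul_prod hθ'i hFμ
      have heq : Function.uncurry (fun r q : ℝ => θ' r * Set.indicator (Set.Iic r) F q)
          = Set.indicator {z : ℝ × ℝ | z.2 ≤ z.1} (fun z => θ' z.1 * F z.2) := by
        funext z
        by_cases hz : z.2 ≤ z.1
        · simp [Function.uncurry, Set.indicator_apply, hz]
        · simp [Function.uncurry, Set.indicator_apply, hz]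
      rw [heq]
      exact h1.indicator hmeas
    have hswap := integral_integral_swap hint
    have hL : (∫ r, ∫ q, θ' r * Set.indicator (Set.Iic r) F q ∂μ ∂μ)
        = ∫ r in Set.Ioc s t, θ' r * (∫ q in s..r, F q) := by
      rw [hμ]
      refine setIntegral_congr_fun measurableSet_Ioc (fun r hr => ?_)
      rw [integral_const_mul]
      congr 1
      rw [integral_indicator measurableSet_Iic, Measure.restrict_restrict measurableSet_Iic,
        intervalIntegral.integral_of_le hr.1.le]
      congr 1
      rw [Set.Iic_inter_Ioc_of_le hr.2]  -- maybe wrong name; want Iic r ∩ Ioc s t = Ioc s r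
    have hR : (∫ q, ∫ r, θ' r * Set.indicator (Set.Iic r) F q ∂μ ∂μ)
        = ∫ q in Set.Ioc s t, (θ t - θ q) * F q := by
      rw [hμ]
      refine setIntegral_congr_fun measurableSet_Ioc (fun q hq => ?_)
      have heq2 : (fun r => θ' r * Set.indicator (Set.Iic r) F q)
          = Set.indicator (Set.Ici q) (fun r => θ' r * F q) := by
        funext r
        by_cases hrq : q ≤ r
        · simp [Set.indicator_apply, hrq]
        · simp [Set.indicator_apply, hrq]
      rw [heq2, integral_indicator measurableSet_Ici,
        Measure.restrict_restrict measurableSet_Ici, integral_mul_const]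
      have : Set.Ici q ∩ Set.Ioc s t = Set.Icc q t := by
        ext r
        simp only [Set.mem_inter_iff, Set.mem_Ici, Set.mem_Ioc, Set.mem_Icc]
        constructor
        · rintro ⟨h1, _, h3⟩; exact ⟨h1, h3⟩
        · rintro ⟨h1, h2⟩; exact ⟨h1, lt_of_lt_of_le hq.1 h1, h2⟩
      rw [this, integral_Icc_eq_integral_Ioc, ← intervalIntegral.integral_of_le hq.2,
        hθFTC q t]
    rw [← hL, ← hR] at *
    rw [hswap]
  -- main computation
  have hVt : V t = V s - ∫ q in s..t, F q := hV t ⟨hst, le_rfl⟩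
  have hPcont : ContinuousOn (fun r => ∫ q in s..r, F q) (Set.Icc s t) := by
    have : IntegrableOn F (Set.uIcc s t) volume := by
      rw [Set.uIcc_of_le hst, integrableOn_Icc_iff_integrableOn_Ioc]
      exact hFi
    have := intervalIntegral.continuousOn_primitive_interval this
    rwa [Set.uIcc_of_le hst] at this
  have hii1 : IntervalIntegrable (fun r => θ' r * (V s - ∫ q in s..r, F q)) volume s t := by
    apply ContinuousOn.intervalIntegrable
    rw [Set.uIcc_of_le hst]
    exact hθc.continuousOn.mul (continuousOn_const.sub hPcont)
  have hii2 : IntervalIntegrable (fun r => θ r * F r) volume s t := by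
    apply hF.continuousOn_mul
    exact fun x _ => (hθ x).continuousAt.continuousWithinAt
  have hsplit : (∫ r in s..t, (θ' r * V r - θ r * F r))
      = (∫ r in s..t, θ' r * (V s - ∫ q in s..r, F q)) - ∫ r in s..t, θ r * F r := by
    rw [← intervalIntegral.integral_sub hii1 hii2]
    refine intervalIntegral.integral_congr (fun r hr => ?_)
    rw [Set.uIcc_of_le hst] at hr
    rw [hV r hr]
  have hsplit2 : (∫ r in s..t, θ' r * (V s - ∫ q in s..r, F q))
      = (θ t - θ s) * V s - ∫ r in s..t, θ' r * (∫ q in s..r, F q) := by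
    have hiiP : IntervalIntegrable (fun r => θ' r * (∫ q in s..r, F q)) volume s t := by
      apply ContinuousOn.intervalIntegrable
      rw [Set.uIcc_of_le hst]
      exact hθc.continuousOn.mul hPcont
    have : (fun r => θ' r * (V s - ∫ q in s..r, F q))
        = fun r => θ' r * V s - θ' r * (∫ q in s..r, F q) := by funext r; ring
    rw [this, intervalIntegral.integral_sub ((hθc.intervalIntegrable s t).mul_const _) hiiP,
      intervalIntegral.integral_mul_const, hθFTC s t]
  have hsplit3 : (∫ q in s..t, (θ t - θ q) * F q)
      = θ t * (∫ q in s..t, F q) - ∫ q in s..t, θ q * F q := by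
    have : (fun q => (θ t - θ q) * F q) = fun q => θ t * F q - θ q * F q := by funext q; ring
    rw [this, intervalIntegral.integral_sub (hF.const_mul _) hii2,
      intervalIntegral.integral_const_mul]
  rw [hsplit, hsplit2, key, hsplit3, hVt]
  ring

set_option maxHeartbeats 4000000 in
/-- Lemma 6.1 of Krylov, "An ersatz existence theorem for fully nonlinear
parabolic equations without convexity assumptions": a maximum principle for
parabolic finite-difference operators on unbounded lattice domains. -/
theorem lattice_maximum_principle
    (d m : ℕ) (hd : 1 ≤ d) (hm : 1 ≤ m) (hdm : d ≤ m)
    (l : Fin m → Fin d → ℤ)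
    (hbasis : ∀ i : Fin d, l (Fin.castLE hdm i) = fun j => if j = i then (1:ℤ) else 0)
    (hsymm : ∀ k : Fin m, ∃ k' : Fin m, l k' = -l k)
    (A B C₀ : ℝ) (hA : 0 ≤ A) (hB : 0 ≤ B) (hC₀ : 0 ≤ C₀) :
    ∃ h₀ : ℝ, 0 < h₀ ∧
    ∀ (T : ℝ), 0 < T →
    ∀ (a : Fin m → ℝ → (Fin d → ℝ) → ℝ) (b : Fin d → ℝ → (Fin d → ℝ) → ℝ)
      (c : ℝ → (Fin d → ℝ) → ℝ),
      (∀ (k : Fin m) (t : ℝ) (x : Fin d → ℝ), 0 ≤ a k t x ∧ a k t x ≤ A) →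
      (∀ (k : Fin d) (t : ℝ) (x : Fin d → ℝ), |b k t x| ≤ B) →
      (∀ (t : ℝ) (x : Fin d → ℝ), |c t x| ≤ C₀) →
    ∀ (h : ℝ), h ∈ Set.Ioc 0 h₀ →
      -- the condition `h·(−b_k)⁺ ≤ a_k`, `k = 1,…,d`
      (∀ (k : Fin d) (t : ℝ) (x : Fin d → ℝ),
        h * max (-(b k t x)) 0 ≤ a (Fin.castLE hdm k) t x) →
    ∀ (Qo Qhat QQ : Set (ℝ × (Fin d → ℝ))),
      -- `Q^o ⊆ (0,T) × hℤ^d`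
      (∀ p ∈ Qo, p.1 ∈ Set.Ioo 0 T ∧ ∃ z : Fin d → ℤ, p.2 = fun i => h * (z i : ℝ)) →
      -- the sections of `Q^o` are open
      (∀ x : Fin d → ℝ, IsOpen {t : ℝ | (t, x) ∈ Qo}) →
      -- `Q̂^o`: points of `(0,T] × hℤ^d` approached from the left within `Q^o`
      Qhat = {p : ℝ × (Fin d → ℝ) | p.1 ∈ Set.Ioc 0 T ∧
        (∃ z : Fin d → ℤ, p.2 = fun i => h * (z i : ℝ)) ∧
        ∃ u : ℕ → ℝ, StrictMono u ∧ (∀ n, u n < p.1 ∧ (u n, p.2) ∈ Qo) ∧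
          Filter.Tendsto u Filter.atTop (nhds p.1)} →
      -- `Q = Q̂^o ∪ {(t, x + h l_k) : (t,x) ∈ Q^o}`
      QQ = Qhat ∪ {p : ℝ × (Fin d → ℝ) |
        ∃ q ∈ Qo, ∃ k : Fin m, p = (q.1, q.2 + h • fun i => ((l k i : ℝ)))} →
    ∀ (η v : ℝ → (Fin d → ℝ) → ℝ) (cbar : ℝ),
      (∀ (t : ℝ) (x : Fin d → ℝ), max (-(c t x)) 0 ≤ cbar) →
      -- `η` is bounded on `Q^o`
      (∃ Me : ℝ, ∀ p ∈ Qo, |η p.1 p.2| ≤ Me) →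
      -- `v` is bounded on `Q`
      (∃ Mv : ℝ, ∀ p ∈ QQ, |v p.1 p.2| ≤ Mv) →
      -- `v(·,x)` is Borel measurable on `Q_{|x}`
      (∀ x : Fin d → ℝ, Measurable (({t : ℝ | (t, x) ∈ QQ}).restrict (fun t => v t x))) →
      -- `v(·,x)` is continuous on `Q^o_{|x}`
      (∀ x : Fin d → ℝ, ContinuousOn (fun t => v t x) {t : ℝ | (t, x) ∈ Qo}) →
      -- the integral form of `∂_t v + Lv = −η` on the sections of `Q^o`
      (∀ (x : Fin d → ℝ) (s t : ℝ), s ≤ t → Set.Icc s t ⊆ {r : ℝ | (r, x) ∈ Qo} →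
        v t x - v s x = -∫ r in s..t,
          ((∑ k : Fin m, a k r x * DeltaOp d h (fun i => ((l k i : ℝ))) (fun y => v r y) x) +
            (∑ k : Fin d, b k r x *
              deltaOp d h (fun i => ((l (Fin.castLE hdm k) i : ℝ))) (fun y => v r y) x) -
            c r x * v r x + η r x)) →
      -- the redefinition of `v` on `Q̂^o ∖ Q^o` as a left `limsup` over `Q^o`
      (∀ p ∈ Qhat \ Qo, v p.1 p.2 =
        Filter.limsup (fun s => v s p.2)
          ((nhdsWithin p.1 (Set.Iio p.1)) ⊓ Filter.principal {s : ℝ | (s, p.2) ∈ Qo})) →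
    ∀ p ∈ Qo, v p.1 p.2 ≤
      T * Real.exp (cbar * T) * sSup ((fun q : ℝ × (Fin d → ℝ) => max (η q.1 q.2) 0) '' Qo) +
        Real.exp (cbar * T) * sSup ((fun q : ℝ × (Fin d → ℝ) => max (v q.1 q.2) 0) '' (QQ \ Qo)) := by
  refine ⟨1, one_pos, ?_⟩
  intro T hT a b c ha hb hc h hh hab Qo Qhat QQ hQo hsec hQhat hQQ η v cbar hcbar hηbd hvbd
    _hmeas hvcont hv hlimsup p₀ hp₀
  obtain ⟨Me, hMe⟩ := hηbd
  obtain ⟨Mv, hMv⟩ := hvbd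
  have hh0 : 0 < h := hh.1
  have hcb0 : 0 ≤ cbar := le_trans (le_max_right _ _) (hcbar 0 0)
  set Sη := sSup ((fun q : ℝ × (Fin d → ℝ) => max (η q.1 q.2) 0) '' Qo) with hSηdef
  set Sv := sSup ((fun q : ℝ × (Fin d → ℝ) => max (v q.1 q.2) 0) '' (QQ \ Qo)) with hSvdef
  -- Qo ⊆ Qhat
  have hseq : ∀ (t' : ℝ) (x : Fin d → ℝ) (w : ℝ), w < t' →
      Set.Ico w t' ⊆ {r : ℝ | (r, x) ∈ Qo} →
      ∃ u : ℕ → ℝ, StrictMono u ∧ (∀ n, u n < t' ∧ (u n, x) ∈ Qo) ∧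
        Filter.Tendsto u Filter.atTop (nhds t') := by
    intro t' x w hw hIc
    refine ⟨fun n => t' - (t' - w) / (n + 2), ?_, ?_, ?_⟩
    · intro p q hpq
      have h2 : (0:ℝ) < t' - w := by linarith
      have : (t' - w) / (q + 2) < (t' - w) / (p + 2) := by
        apply div_lt_div_of_pos_left h2 (by positivity)
        exact_mod_cast by omega
      linarith
    · intro n
      have h2 : (0:ℝ) < t' - w := by linarith
      have h3 : (0:ℝ) < (n:ℝ) + 2 := by positivity
      have h4 : (t' - w) / (n + 2) ≤ (t' - w) := by
        rw [div_le_iff₀ h3]; nlinarith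
      have h5 : 0 < (t' - w) / (n + 2) := by positivity
      constructor
      · linarith
      · exact hIc ⟨by linarith, by linarith⟩
    · have : Filter.Tendsto (fun n : ℕ => (t' - w) / (n + 2)) Filter.atTop (nhds 0) := by
        have h1 : Filter.Tendsto (fun n : ℕ => ((n:ℝ) + 2)) Filter.atTop Filter.atTop := by
          apply Filter.tendsto_atTop_add_const_right
          exact tendsto_natCast_atTop_atTop
        exact Filter.Tendsto.div_atTop tendsto_const_nhds h1
      have := Filter.Tendsto.const_sub t' this
      simpa using this
  have hQoQhat : Qo ⊆ Qhat := by
    intro p hp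
    obtain ⟨δ, hδ, hball⟩ := Metric.isOpen_iff.1 (hsec p.2) p.1 hp
    have hIc : Set.Ico (p.1 - δ/2) p.1 ⊆ {r : ℝ | (r, p.2) ∈ Qo} := by
      intro r hr
      apply hball
      simp only [Metric.mem_ball, Real.dist_eq, abs_lt]
      constructor <;> [linarith [hr.1]; linarith [hr.2]]
    obtain ⟨u, hu1, hu2, hu3⟩ := hseq p.1 p.2 (p.1 - δ/2) (by linarith) hIc
    rw [hQhat]
    exact ⟨⟨(hQo p hp).1.1, (hQo p hp).1.2.le⟩, (hQo p hp).2, u, hu1,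
      fun n => ⟨(hu2 n).1, (hu2 n).2⟩, hu3⟩
  have hQhatQQ : Qhat ⊆ QQ := by rw [hQQ]; exact Set.subset_union_left
  have hQoQQ : Qo ⊆ QQ := fun p hp => hQhatQQ (hQoQhat hp)
  have hT_mem : ∀ p ∈ QQ, 0 < p.1 ∧ p.1 ≤ T := by
    intro p hp
    rw [hQQ] at hp
    rcases hp with hp | hp
    · rw [hQhat] at hp; exact ⟨hp.1.1, hp.1.2⟩
    · obtain ⟨q, hq, k, rfl⟩ := hp
      exact ⟨(hQo q hq).1.1, (hQo q hq).1.2.le⟩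
  have hMv0 : 0 ≤ Mv := le_trans (abs_nonneg _) (hMv p₀ (hQoQQ hp₀))
  have hSηbdd : BddAbove ((fun q : ℝ × (Fin d → ℝ) => max (η q.1 q.2) 0) '' Qo) := by
    refine ⟨Me, ?_⟩
    rintro y ⟨q, hq, rfl⟩
    exact max_le (le_trans (le_abs_self _) (hMe q hq))
      (le_trans (abs_nonneg _) (hMe q hq))
  have hSvbdd : BddAbove ((fun q : ℝ × (Fin d → ℝ) => max (v q.1 q.2) 0) '' (QQ \ Qo)) := by
    refine ⟨Mv, ?_⟩
    rintro y ⟨q, hq, rfl⟩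
    exact max_le (le_trans (le_abs_self _) (hMv q hq.1)) hMv0
  have hSη0 : 0 ≤ Sη :=
    le_trans (le_max_right _ _) (le_csSup hSηbdd ⟨p₀, hp₀, rfl⟩)
  have hSv0 : 0 ≤ Sv := by
    by_cases hne : (QQ \ Qo).Nonempty
    · obtain ⟨q, hq⟩ := hne
      exact le_trans (le_max_right _ _) (le_csSup hSvbdd ⟨q, hq, rfl⟩)
    · rw [Set.not_nonempty_iff_eq_empty] at hne
      rw [hSvdef, hne, Set.image_empty, Real.sSup_empty]
  clear_value Sη Sv
  obtain ⟨t₀, x₀⟩ := p₀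
  have ht₀ : t₀ ∈ Set.Ioo 0 T := (hQo _ hp₀).1
  -- θ and its properties
  set θ : ℝ → ℝ := fun r => Real.exp (cbar * (r - T)) with hθdef
  have hθpos : ∀ r, 0 < θ r := by
    intro r; rw [hθdef]; exact Real.exp_pos _
  have hθle1 : ∀ r, r ≤ T → θ r ≤ 1 := by
    intro r hr
    rw [hθdef]
    simp only
    rw [show (1:ℝ) = Real.exp 0 by simp]
    exact Real.exp_le_exp.2 (by nlinarith)
  have hθmono : ∀ r q, r ≤ q → θ r ≤ θ q := by
    intro r q hrq
    rw [hθdef]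
    exact Real.exp_le_exp.2 (by nlinarith)
  have hθv_le : ∀ (r : ℝ) (x : Fin d → ℝ), r ≤ T → (r, x) ∈ QQ → θ r * v r x ≤ max (v r x) 0 := by
    intro r x hr hQ
    rcases le_or_gt 0 (v r x) with hv0 | hv0
    · have := hθle1 r hr
      calc θ r * v r x ≤ 1 * v r x := by nlinarith [hθpos r]
      _ = v r x := by ring
      _ ≤ max (v r x) 0 := le_max_left _ _
    · have := hθpos r
      calc θ r * v r x ≤ 0 := by nlinarith
      _ ≤ max (v r x) 0 := le_max_right _ _
  clear_value θ
  -- the main ε-claim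
  have Hmain : ∀ ε : ℝ, 0 < ε →
      θ t₀ * v t₀ x₀ ≤ Sv + (T - t₀) * Sη + ε * Real.exp (T - t₀) := by
    intro ε hε
    set φ : ℝ → ℝ := fun r => Sv + (T - r) * Sη + ε * Real.exp (T - r) with hφdef
    set U : ℝ → (Fin d → ℝ) → ℝ := fun r x => θ r * v r x - φ r with hUdef
    clear_value φ U
    have hφ0 : ∀ r, r ≤ T → 0 ≤ φ r := by
      intro r hr
      have h1 : (1:ℝ) ≤ Real.exp (T - r) := Real.one_le_exp (by linarith)
      have h2 : 0 ≤ (T - r) * Sη := mul_nonneg (by linarith) hSη0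
      simp only [hφdef]
      nlinarith
    suffices hU0 : U t₀ x₀ ≤ 0 by
      simp only [hUdef, hφdef] at hU0
      linarith
    by_contra hposU
    push_neg at hposU
    set SU := (fun p : ℝ × (Fin d → ℝ) => U p.1 p.2) '' QQ with hSUdef
    have hSUne : SU.Nonempty := ⟨_, ⟨(t₀, x₀), hQoQQ hp₀, rfl⟩⟩
    have hUb : ∀ p ∈ QQ, U p.1 p.2 ≤ Mv := by
      intro p hp
      have h1 := hT_mem p hp
      have h2 : θ p.1 * v p.1 p.2 ≤ Mv := by
        have h5 := hθv_le p.1 p.2 h1.2 hp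
        have h3 : max (v p.1 p.2) 0 ≤ Mv :=
          max_le (le_trans (le_abs_self _) (hMv p hp)) hMv0
        exact le_trans h5 h3
      have h4 := hφ0 p.1 h1.2
      simp only [hUdef]
      linarith
    have hSUbdd : BddAbove SU := ⟨Mv, by rintro y ⟨p, hp, rfl⟩; exact hUb p hp⟩
    have hSUmem : ∀ p ∈ QQ, U p.1 p.2 ∈ SU := fun p hp => ⟨p, hp, rfl⟩
    clear_value SU
    set M := sSup SU with hMdef
    have hMU : ∀ p ∈ QQ, U p.1 p.2 ≤ M := by
      intro p hp
      rw [hMdef]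
      exact le_csSup hSUbdd (hSUmem p hp)
    have hM : 0 < M := lt_of_lt_of_le hposU (hMU (t₀, x₀) (hQoQQ hp₀))
    clear_value M
    set Ch := (2*(m:ℝ)*A + (d:ℝ)*(A + h*B))/h^2 + 1 with hChdef
    have hChnum : 0 ≤ 2*(m:ℝ)*A + (d:ℝ)*(A + h*B) := by
      have hm0 : (0:ℝ) ≤ (m:ℝ) := Nat.cast_nonneg m
      have hd0 : (0:ℝ) ≤ (d:ℝ) := Nat.cast_nonneg d
      have : 0 ≤ A + h*B := by nlinarith [hh0.le]
      nlinarith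
    have hCh : 0 < Ch := by
      have : 0 ≤ (2*(m:ℝ)*A + (d:ℝ)*(A + h*B))/h^2 := div_nonneg hChnum (by positivity)
      rw [hChdef]; linarith
    clear_value Ch
    set ρ := min (M/4) (ε/(4*Ch)) with hρdef
    have hρ0 : 0 < ρ := by
      rw [hρdef]
      exact lt_min (by linarith) (div_pos hε (by linarith))
    have hρM : ρ ≤ M/4 := hρdef ▸ min_le_left _ _
    have hρC : ρ ≤ ε/(4*Ch) := hρdef ▸ min_le_right _ _
    clear_value ρ
    set κ := ε/2 with hκdef
    clear_value κ
    have hκpos : 0 < κ := by rw [hκdef]; linarith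
    have hbdry : ∀ p ∈ QQ, p ∉ Qo → U p.1 p.2 ≤ -ε := by
      intro p hp hpn
      have h1 := hT_mem p hp
      have h2 : θ p.1 * v p.1 p.2 ≤ Sv := by
        rw [hSvdef]
        exact le_trans (hθv_le p.1 p.2 h1.2 hp) (le_csSup hSvbdd ⟨p, ⟨hp, hpn⟩, rfl⟩)
      have h3 : (1:ℝ) ≤ Real.exp (T - p.1) := Real.one_le_exp (by linarith [h1.2])
      have h4 : 0 ≤ (T - p.1) * Sη := mul_nonneg (by linarith [h1.2]) hSη0
      simp only [hUdef, hφdef]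
      nlinarith
    obtain ⟨y, hySU, hy⟩ : ∃ y ∈ SU, M - ρ < y :=
      exists_lt_of_lt_csSup hSUne (by rw [hMdef] at hρM ⊢; linarith [hρ0])
    rw [hSUdef] at hySU
    obtain ⟨p₁, hp₁QQ, rfl⟩ := hySU
    obtain ⟨t₁, x₁⟩ := p₁
    simp only at hy
    have hp₁Qo : (t₁, x₁) ∈ Qo := by
      by_contra hn
      have := hbdry (t₁, x₁) hp₁QQ hn
      simp only at this
      linarith [hρM, hM, hε]
    set sec := {r : ℝ | (r, x₁) ∈ Qo} with hsecdef
    have hsecopen : IsOpen sec := hsec x₁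
    have ht₁sec : t₁ ∈ sec := hp₁Qo
    have hsecT : ∀ r ∈ sec, 0 < r ∧ r < T := fun r hr => ⟨(hQo _ hr).1.1, (hQo _ hr).1.2⟩
    -- the exit time β
    set Bset := {b' : ℝ | t₁ < b' ∧ Set.Ico t₁ b' ⊆ sec} with hBdef
    obtain ⟨δ₀, hδ₀, hball₀⟩ := Metric.isOpen_iff.1 hsecopen t₁ ht₁sec
    have hBmem : t₁ + δ₀/2 ∈ Bset := by
      constructor
      · linarith
      · intro r hr
        apply hball₀
        simp only [Metric.mem_ball, Real.dist_eq, abs_lt]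
        constructor <;> [linarith [hr.1]; linarith [hr.2]]
    have hBne : Bset.Nonempty := ⟨_, hBmem⟩
    have hBbdd : BddAbove Bset := by
      refine ⟨T, fun b' hb' => ?_⟩
      by_contra hbT
      push_neg at hbT
      have hTsec : T ∈ sec := hb'.2 ⟨(hsecT t₁ ht₁sec).2.le, hbT⟩
      exact absurd (hsecT T hTsec).2 (lt_irrefl T)
    set β := sSup Bset with hβdef
    have ht₁β : t₁ < β := lt_of_lt_of_le (by linarith) (le_csSup hBbdd hBmem)
    have hβT : β ≤ T := csSup_le hBne (by
      intro b' hb'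
      by_contra hbT
      push_neg at hbT
      exact absurd (hsecT T (hb'.2 ⟨(hsecT t₁ ht₁sec).2.le, hbT⟩)).2 (lt_irrefl T))
    have hIco : Set.Ico t₁ β ⊆ sec := by
      intro r hr
      obtain ⟨b', hb', hrb'⟩ := exists_lt_of_lt_csSup hBne hr.2
      exact hb'.2 ⟨hr.1, hrb'⟩
    have hβsec : β ∉ sec := by
      intro hβmem
      obtain ⟨δ₁, hδ₁, hball₁⟩ := Metric.isOpen_iff.1 hsecopen β hβmem
      have hmem : β + δ₁/2 ∈ Bset := by
        constructor
        · linarith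
        · intro r hr
          rcases lt_or_ge r β with hrβ | hrβ
          · exact hIco ⟨hr.1, hrβ⟩
          · apply hball₁
            simp only [Metric.mem_ball, Real.dist_eq, abs_lt]
            constructor <;> [linarith [hr.2]; linarith [hr.2]]
      linarith [le_csSup hBbdd hmem]
    clear_value β
    -- continuity of U in time
    have hθcont : Continuous θ := by
      rw [hθdef]
      exact Real.continuous_exp.comp (continuous_const.mul (continuous_id.sub continuous_const))
    have hφcont : Continuous φ := by
      rw [hφdef]
      exact (continuous_const.add ((continuous_const.sub continuous_id).mul continuous_const)).add
        (continuous_const.mul (Real.continuous_exp.comp (continuous_const.sub continuous_id)))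
    have hUcont : ContinuousOn (fun r => U r x₁) sec := by
      simp only [hUdef]
      exact (hθcont.continuousOn.mul (hvcont x₁)).sub hφcont.continuousOn
    -- the time-derivative data
    set F : ℝ → ℝ := fun r =>
      (∑ k : Fin m, a k r x₁ * DeltaOp d h (fun i => ((l k i : ℝ))) (fun y => v r y) x₁) +
        (∑ k : Fin d, b k r x₁ *
          deltaOp d h (fun i => ((l (Fin.castLE hdm k) i : ℝ))) (fun y => v r y) x₁) -
        c r x₁ * v r x₁ + η r x₁ with hFdef
    set θ' : ℝ → ℝ := fun r => Real.exp (cbar * (r - T)) * cbar with hθ'def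
    have hθderiv : ∀ r, HasDerivAt θ (θ' r) r := by
      intro r
      have h1 : HasDerivAt (fun r : ℝ => cbar * (r - T)) cbar r := by
        simpa using ((hasDerivAt_id r).sub_const T).const_mul cbar
      rw [hθdef, hθ'def]
      exact h1.exp
    have hθ'cont : Continuous θ' := by
      rw [hθ'def]
      exact (Real.continuous_exp.comp (continuous_const.mul (continuous_id.sub continuous_const))).mul
        continuous_const
    set φ' : ℝ → ℝ := fun r => -Sη - ε * Real.exp (T - r) with hφ'def
    have hφderiv : ∀ r, HasDerivAt φ (φ' r) r := by
      intro r
      have h1 : HasDerivAt (fun r : ℝ => T - r) (-1) r := by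
        simpa using (hasDerivAt_id' r).const_sub T
      have h2 : HasDerivAt (fun r : ℝ => Real.exp (T - r)) (Real.exp (T - r) * (-1)) r := h1.exp
      have h3 : HasDerivAt (fun r : ℝ => Sv + (T - r) * Sη + ε * Real.exp (T - r))
          (0 + (-1) * Sη + ε * (Real.exp (T - r) * (-1))) r :=
        ((hasDerivAt_const r Sv).add (h1.mul_const Sη)).add (h2.const_mul ε)
      rw [hφdef, hφ'def]
      convert h3 using 1
      ring
    have hφ'cont : Continuous φ' := by
      rw [hφ'def]
      exact (continuous_const.neg).sub
        (continuous_const.mul (Real.continuous_exp.comp (continuous_const.sub continuous_id)))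
    have hθ'θ : ∀ r, θ' r = θ r * cbar := fun r => by rw [hθ'def, hθdef]
    clear_value F θ' φ'
    -- neighbours stay in QQ
    have hnbrp : ∀ (r : ℝ) (k : Fin m), (r, x₁) ∈ Qo →
        (r, x₁ + h • fun i => ((l k i : ℝ))) ∈ QQ := by
      intro r k hr
      rw [hQQ]
      right
      exact ⟨(r, x₁), hr, k, rfl⟩
    have hnbrm : ∀ (r : ℝ) (k : Fin m), (r, x₁) ∈ Qo →
        (r, x₁ - h • fun i => ((l k i : ℝ))) ∈ QQ := by
      intro r k hr
      obtain ⟨k', hk'⟩ := hsymm k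
      have heq : x₁ - h • (fun i => ((l k i : ℝ))) = x₁ + h • fun i => ((l k' i : ℝ)) := by
        rw [hk']
        funext j
        simp only [Pi.sub_apply, Pi.add_apply, Pi.smul_apply, smul_eq_mul, Pi.neg_apply,
          Int.cast_neg]
        push_cast
        ring
      rw [heq]
      exact hnbrp r k' hr
    -- the pointwise "heart" inequality
    have heart : ∀ r, (r, x₁) ∈ Qo → M - 2*ρ ≤ U r x₁ →
        κ ≤ θ' r * v r x₁ - θ r * F r - φ' r := by
      intro r hrQo hUr
      have hrT : r < T := (hsecT r hrQo).2
      set SP :=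
        (∑ k : Fin m, a k r x₁ * DeltaOp d h (fun i => ((l k i : ℝ))) (fun y => v r y) x₁) +
          (∑ k : Fin d, b k r x₁ *
            deltaOp d h (fun i => ((l (Fin.castLE hdm k) i : ℝ))) (fun y => v r y) x₁)
        with hSPdef
      clear_value SP
      have hFr : F r = SP - c r x₁ * v r x₁ + η r x₁ := by
        rw [hSPdef]
        simp only [hFdef]
      -- spatial estimate
      have hspat : θ r * SP ≤ 2*ρ*Ch := by
        have hne : h ≠ 0 := ne_of_gt hh0
        have hha : (0:ℝ) < h^2 := by positivity
        have hAh : 0 ≤ (A/h^2)*(2*ρ) := mul_nonneg (div_nonneg hA hha.le) (by linarith [hρ0])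
        set Xp : Fin m → ℝ := fun k => U r (x₁ + h • fun i => ((l k i : ℝ))) - U r x₁ with hXpdef
        set Xm : Fin m → ℝ := fun k => U r (x₁ - h • fun i => ((l k i : ℝ))) - U r x₁ with hXmdef
        have hXp2 : ∀ k, Xp k ≤ 2*ρ := by
          intro k
          have h1 : U r (x₁ + h • fun i => ((l k i : ℝ))) ≤ M := hMU _ (hnbrp r k hrQo)
          simp only [hXpdef]
          linarith
        have hXm2 : ∀ k, Xm k ≤ 2*ρ := by
          intro k
          have h1 : U r (x₁ - h • fun i => ((l k i : ℝ))) ≤ M := hMU _ (hnbrm r k hrQo)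
          simp only [hXmdef]
          linarith
        have hSPe : θ r * SP = (∑ k : Fin m, (a k r x₁/h^2) * Xp k)
            + (∑ k : Fin m, (a k r x₁/h^2) * Xm k)
            + (∑ j : Fin d, (b j r x₁/h) * Xp (Fin.castLE hdm j)) := by
          rw [hSPdef, mul_add, Finset.mul_sum, Finset.mul_sum]
          congr 1
          · rw [← Finset.sum_add_distrib]
            apply Finset.sum_congr rfl
            intro k _
            simp only [hXpdef, hXmdef, hUdef, DeltaOp]
            field_simp
            ring
          · apply Finset.sum_congr rfl
            intro j _
            simp only [hXpdef, hUdef, deltaOp]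
            field_simp
            ring
        clear_value Xp Xm
        have hb1 : ∀ k : Fin m, (a k r x₁/h^2) * Xm k ≤ (A/h^2)*(2*ρ) := by
          intro k
          have h1 := (ha k r x₁).1
          have h2 := (ha k r x₁).2
          have h4 : (a k r x₁/h^2) * Xm k ≤ (a k r x₁/h^2) * (2*ρ) :=
            mul_le_mul_of_nonneg_left (hXm2 k) (div_nonneg h1 hha.le)
          have h6 : a k r x₁/h^2 ≤ A/h^2 := by gcongr
          have h5 : (a k r x₁/h^2) * (2*ρ) ≤ (A/h^2)*(2*ρ) :=
            mul_le_mul_of_nonneg_right h6 (by linarith [hρ0])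
          linarith
        have hb1p : ∀ k : Fin m, (a k r x₁/h^2) * Xp k ≤ (A/h^2)*(2*ρ) := by
          intro k
          have h1 := (ha k r x₁).1
          have h2 := (ha k r x₁).2
          have h4 : (a k r x₁/h^2) * Xp k ≤ (a k r x₁/h^2) * (2*ρ) :=
            mul_le_mul_of_nonneg_left (hXp2 k) (div_nonneg h1 hha.le)
          have h6 : a k r x₁/h^2 ≤ A/h^2 := by gcongr
          have h5 : (a k r x₁/h^2) * (2*ρ) ≤ (A/h^2)*(2*ρ) :=
            mul_le_mul_of_nonneg_right h6 (by linarith [hρ0])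
          linarith
        have hb3 : ∀ j : Fin d, ((a (Fin.castLE hdm j) r x₁ + h * b j r x₁)/h^2) *
            Xp (Fin.castLE hdm j) ≤ ((A + h*B)/h^2)*(2*ρ) := by
          intro j
          have h1 := (ha (Fin.castLE hdm j) r x₁).1
          have h2 := (ha (Fin.castLE hdm j) r x₁).2
          have h3 : h * (-(b j r x₁)) ≤ h * max (-(b j r x₁)) 0 :=
            mul_le_mul_of_nonneg_left (le_max_left _ _) hh0.le
          have h4 := hab j r x₁
          have hc0 : 0 ≤ a (Fin.castLE hdm j) r x₁ + h * b j r x₁ := by nlinarith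
          have hcA : a (Fin.castLE hdm j) r x₁ + h * b j r x₁ ≤ A + h*B := by
            have h5 : h * b j r x₁ ≤ h * B :=
              mul_le_mul_of_nonneg_left (le_trans (le_abs_self _) (hb j r x₁)) hh0.le
            linarith
          have h7 : ((a (Fin.castLE hdm j) r x₁ + h * b j r x₁)/h^2) * Xp (Fin.castLE hdm j)
              ≤ ((a (Fin.castLE hdm j) r x₁ + h * b j r x₁)/h^2) * (2*ρ) :=
            mul_le_mul_of_nonneg_left (hXp2 _) (div_nonneg hc0 hha.le)
          have h8 : (a (Fin.castLE hdm j) r x₁ + h * b j r x₁)/h^2 ≤ (A + h*B)/h^2 := by gcongr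
          have h9 : ((a (Fin.castLE hdm j) r x₁ + h * b j r x₁)/h^2) * (2*ρ)
              ≤ ((A + h*B)/h^2)*(2*ρ) := mul_le_mul_of_nonneg_right h8 (by linarith [hρ0])
          linarith
        have hsum1 : (∑ k : Fin m, (a k r x₁/h^2) * Xm k) ≤ (m:ℝ) * ((A/h^2)*(2*ρ)) := by
          calc (∑ k : Fin m, (a k r x₁/h^2) * Xm k) ≤ ∑ _k : Fin m, (A/h^2)*(2*ρ) :=
                Finset.sum_le_sum (fun k _ => hb1 k)
          _ = (m:ℝ) * ((A/h^2)*(2*ρ)) := by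
                rw [Finset.sum_const, Finset.card_univ, Fintype.card_fin, nsmul_eq_mul]
        have hbsplit : (∑ j : Fin d, (b j r x₁/h) * Xp (Fin.castLE hdm j))
            = (∑ j : Fin d, ((a (Fin.castLE hdm j) r x₁ + h * b j r x₁)/h^2) *
                Xp (Fin.castLE hdm j))
              - (∑ j : Fin d, (a (Fin.castLE hdm j) r x₁/h^2) * Xp (Fin.castLE hdm j)) := by
          rw [← Finset.sum_sub_distrib]
          apply Finset.sum_congr rfl
          intro j _
          field_simp
          ring
        have himg : (∑ j : Fin d, (a (Fin.castLE hdm j) r x₁/h^2) * Xp (Fin.castLE hdm j))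
            = ∑ k ∈ Finset.univ.image (Fin.castLE hdm), (a k r x₁/h^2) * Xp k := by
          rw [Finset.sum_image (fun i _ j _ hij => Fin.castLE_injective hdm hij)]
        have hsd : (∑ k ∈ Finset.univ \ Finset.univ.image (Fin.castLE hdm),
              (a k r x₁/h^2) * Xp k)
            = (∑ k : Fin m, (a k r x₁/h^2) * Xp k)
              - ∑ k ∈ Finset.univ.image (Fin.castLE hdm), (a k r x₁/h^2) * Xp k :=
          Finset.sum_sdiff_eq_sub (Finset.subset_univ _)
        have hsd2 : (∑ k ∈ Finset.univ \ Finset.univ.image (Fin.castLE hdm),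
              (a k r x₁/h^2) * Xp k) ≤ (m:ℝ) * ((A/h^2)*(2*ρ)) := by
          calc (∑ k ∈ Finset.univ \ Finset.univ.image (Fin.castLE hdm), (a k r x₁/h^2) * Xp k)
              ≤ ∑ _k ∈ Finset.univ \ Finset.univ.image (Fin.castLE hdm), (A/h^2)*(2*ρ) :=
                Finset.sum_le_sum (fun k _ => hb1p k)
          _ = ((Finset.univ \ Finset.univ.image (Fin.castLE hdm)).card : ℝ) *
                ((A/h^2)*(2*ρ)) := by rw [Finset.sum_const, nsmul_eq_mul]
          _ ≤ (m:ℝ) * ((A/h^2)*(2*ρ)) := by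
                apply mul_le_mul_of_nonneg_right _ hAh
                have hcard := Finset.card_le_univ
                  (Finset.univ \ Finset.univ.image (Fin.castLE hdm))
                rw [Fintype.card_fin] at hcard
                exact_mod_cast hcard
        have hsum3 : (∑ j : Fin d, ((a (Fin.castLE hdm j) r x₁ + h * b j r x₁)/h^2) *
              Xp (Fin.castLE hdm j)) ≤ (d:ℝ) * (((A + h*B)/h^2)*(2*ρ)) := by
          calc (∑ j : Fin d, ((a (Fin.castLE hdm j) r x₁ + h * b j r x₁)/h^2) *
                Xp (Fin.castLE hdm j))
              ≤ ∑ _j : Fin d, ((A + h*B)/h^2)*(2*ρ) := Finset.sum_le_sum (fun j _ => hb3 j)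
          _ = (d:ℝ) * (((A + h*B)/h^2)*(2*ρ)) := by
                rw [Finset.sum_const, Finset.card_univ, Fintype.card_fin, nsmul_eq_mul]
        have hfin : (m:ℝ)*((A/h^2)*(2*ρ)) + (m:ℝ)*((A/h^2)*(2*ρ))
              + (d:ℝ)*(((A+h*B)/h^2)*(2*ρ))
            = 2*ρ*((2*(m:ℝ)*A + (d:ℝ)*(A+h*B))/h^2) := by
          field_simp
          ring
        have hCh2 : 2*ρ*((2*(m:ℝ)*A + (d:ℝ)*(A+h*B))/h^2) ≤ 2*ρ*Ch := by
          rw [hChdef]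
          nlinarith [hρ0]
        rw [hSPe, hbsplit]
        linarith [hsum1, hsum3, hsd2, hsd, himg, hfin, hCh2]
      have hθvpos : 0 < θ r * v r x₁ := by
        have h1 := hφ0 r hrT.le
        have h2 : θ r * v r x₁ = U r x₁ + φ r := by simp only [hUdef]; ring
        rw [h2]
        nlinarith [hρM, hM]
      have hcc : 0 ≤ c r x₁ + cbar := by
        have h1 := hcbar r x₁
        have h2 := le_max_left (-(c r x₁)) (0:ℝ)
        linarith
      have hθη : θ r * η r x₁ ≤ Sη := by
        have h1 : max (η r x₁) 0 ≤ Sη := by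
          rw [hSηdef]
          exact le_csSup hSηbdd ⟨(r, x₁), hrQo, rfl⟩
        have h2 := hθpos r
        have h3 := hθle1 r hrT.le
        rcases le_or_gt 0 (η r x₁) with h4 | h4
        · nlinarith [le_max_left (η r x₁) (0:ℝ)]
        · nlinarith [le_max_right (η r x₁) (0:ℝ)]
      have hexp1 : ε ≤ ε * Real.exp (T - r) :=
        le_mul_of_one_le_right hε.le (Real.one_le_exp (by linarith))
      have hρε : 2*ρ*Ch ≤ ε/2 := by
        rw [le_div_iff₀ (by linarith [hCh] : (0:ℝ) < 4*Ch)] at hρC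
        linarith
      have hexpand : θ' r * v r x₁ - θ r * F r - φ' r
          = (c r x₁ + cbar) * (θ r * v r x₁) - θ r * SP - θ r * η r x₁
            + Sη + ε * Real.exp (T - r) := by
        rw [hFr, hθ'θ r, hφ'def]
        ring
      rw [hexpand]
      have hccv : 0 ≤ (c r x₁ + cbar) * (θ r * v r x₁) := mul_nonneg hcc hθvpos.le
      rw [hκdef]
      linarith
    -- the one-interval step estimate
    have hVeqmk : ∀ s t : ℝ, s ≤ t → Set.Icc s t ⊆ sec →
        ∀ r ∈ Set.Icc s t, v r x₁ = v s x₁ - ∫ q in s..r, F q := by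
      intro s t hst hsub r hr
      have h1 := hv x₁ s r hr.1 (fun q hq => hsub ⟨hq.1, le_trans hq.2 hr.2⟩)
      rw [← hFdef] at h1
      linarith
    have step : ∀ s t : ℝ, t₁ ≤ s → s ≤ t → t < β →
        (∀ r ∈ Set.Icc s t, M - 2*ρ ≤ U r x₁) → U s x₁ + κ*(t-s) ≤ U t x₁ := by
      intro s t hs hst htβ hnear
      have hsub : Set.Icc s t ⊆ sec :=
        fun r hr => hIco ⟨le_trans hs hr.1, lt_of_le_of_lt hr.2 htβ⟩
      have hQor : ∀ r ∈ Set.Icc s t, (r, x₁) ∈ Qo := fun r hr => hsub hr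
      have hrT : ∀ r ∈ Set.Icc s t, r ≤ T := fun r hr => ((hsecT r (hsub hr)).2).le
      by_cases hii : IntervalIntegrable F volume s t
      · have hVeq := hVeqmk s t hst hsub
        have hparts := parts_aux hst hθderiv hθ'cont hii (V := fun r => v r x₁) hVeq
        have hφint : ∫ r in s..t, φ' r = φ t - φ s :=
          intervalIntegral.integral_eq_sub_of_hasDerivAt (fun x _ => hφderiv x)
            (hφ'cont.intervalIntegrable s t)
        have hii1 : IntervalIntegrable (fun r => θ' r * v r x₁) volume s t := by
          apply ContinuousOn.intervalIntegrable
          rw [Set.uIcc_of_le hst]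
          exact hθ'cont.continuousOn.mul ((hvcont x₁).mono hsub)
        have hii2 : IntervalIntegrable (fun r => θ r * F r) volume s t :=
          hii.continuousOn_mul hθcont.continuousOn
        have hiiI : IntervalIntegrable (fun r => θ' r * v r x₁ - θ r * F r - φ' r) volume s t :=
          (hii1.sub hii2).sub (hφ'cont.intervalIntegrable s t)
        have hmono : ∀ r ∈ Set.Icc s t, κ ≤ θ' r * v r x₁ - θ r * F r - φ' r :=
          fun r hr => heart r (hQor r hr) (hnear r hr)
        have hint : κ * (t - s) ≤ ∫ r in s..t, (θ' r * v r x₁ - θ r * F r - φ' r) := by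
          have h1 := intervalIntegral.integral_mono_on hst intervalIntegrable_const hiiI hmono
          rwa [intervalIntegral.integral_const, smul_eq_mul, mul_comm] at h1
        have hsplit : (∫ r in s..t, (θ' r * v r x₁ - θ r * F r - φ' r))
            = (∫ r in s..t, (θ' r * v r x₁ - θ r * F r)) - ∫ r in s..t, φ' r := by
          rw [← intervalIntegral.integral_sub (hii1.sub hii2) (hφ'cont.intervalIntegrable s t)]
        rw [hsplit, ← hparts, hφint] at hint
        simp only [hUdef]
        linarith
      · have h0 : (∫ r in s..t, F r) = 0 := intervalIntegral.integral_undef hii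
        have h1 := hVeqmk s t hst hsub t ⟨hst, le_rfl⟩
        rw [h0] at h1
        have hvst : v t x₁ = v s x₁ := by linarith
        have hUs : M - 2*ρ ≤ U s x₁ := hnear s ⟨le_rfl, hst⟩
        have hsT : s ≤ T := hrT s ⟨le_rfl, hst⟩
        have htT : t ≤ T := hrT t ⟨hst, le_rfl⟩
        have hvs : 0 < v s x₁ := by
          have h2 : θ s * v s x₁ = U s x₁ + φ s := by simp only [hUdef]; ring
          have h3 := hφ0 s hsT
          nlinarith [hθpos s, hρM, hM]
        have hθts : θ s ≤ θ t := hθmono s t hst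
        have hφst : ε * (t - s) ≤ φ s - φ t := by
          have e1 : Real.exp (T - s) = Real.exp (T - t) * Real.exp (t - s) := by
            rw [← Real.exp_add]
            ring_nf
          have e2 : (t - s) + 1 ≤ Real.exp (t - s) := by
            have := Real.add_one_le_exp (t - s)
            linarith
          have e3 : (1:ℝ) ≤ Real.exp (T - t) := Real.one_le_exp (by linarith)
          have e4 : 0 ≤ (t - s) * Sη := mul_nonneg (by linarith) hSη0
          have e5 : (1:ℝ) * (t - s) ≤ Real.exp (T - t) * (Real.exp (t - s) - 1) :=
            mul_le_mul e3 (by linarith) (by linarith) (by linarith)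
          have e6 : ε * ((1:ℝ) * (t - s)) ≤ ε * (Real.exp (T - t) * (Real.exp (t - s) - 1)) :=
            mul_le_mul_of_nonneg_left e5 hε.le
          simp only [hφdef]
          rw [e1]
          nlinarith [e4, e6]
        have hUts : U t x₁ - U s x₁ = v s x₁ * (θ t - θ s) + (φ s - φ t) := by
          simp only [hUdef]
          rw [hvst]
          ring
        have hpos2 : 0 ≤ v s x₁ * (θ t - θ s) := mul_nonneg hvs.le (by linarith)
        have hpos3 : 0 ≤ ε * (t - s) := mul_nonneg hε.le (by linarith)
        rw [hκdef]
        nlinarith [hUts, hpos2, hφst, hpos3]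
    -- propagation to the exit time
    have hUt₁ : M - ρ < U t₁ x₁ := hy
    have prop : ∀ t₂, t₂ ∈ Set.Ico t₁ β → M - ρ ≤ U t₂ x₁ := by
      intro t₂ ht₂
      rcases eq_or_lt_of_le ht₂.1 with heq | hlt
      · rw [← heq]; exact hUt₁.le
      · set E := {t : ℝ | t ∈ Set.Icc t₁ t₂ ∧ ∀ r ∈ Set.Icc t₁ t, M - 2*ρ ≤ U r x₁}
          with hEdef
        have hE₁ : t₁ ∈ E := by
          refine ⟨⟨le_rfl, hlt.le⟩, fun r hr => ?_⟩
          have hr1 : r = t₁ := le_antisymm hr.2 hr.1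
          rw [hr1]
          linarith [hρ0]
        have hEbdd : BddAbove E := ⟨t₂, fun t ht => ht.1.2⟩
        have hEne : E.Nonempty := ⟨t₁, hE₁⟩
        set τ := sSup E with hτdef
        have hτ1 : t₁ ≤ τ := by rw [hτdef]; exact le_csSup hEbdd hE₁
        have hτ2 : τ ≤ t₂ := by rw [hτdef]; exact csSup_le hEne (fun t ht => ht.1.2)
        clear_value τ
        have hτβ : τ < β := lt_of_le_of_lt hτ2 ht₂.2
        have hτsec : τ ∈ sec := hIco ⟨hτ1, hτβ⟩
        have hbelow : ∀ r, t₁ ≤ r → r < τ → M - 2*ρ ≤ U r x₁ := by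
          intro r hr1 hr2
          rw [hτdef] at hr2
          obtain ⟨t', ht'E, hrt'⟩ := exists_lt_of_lt_csSup hEne hr2
          exact ht'E.2 r ⟨hr1, hrt'.le⟩
        have hnearτ : ∀ r ∈ Set.Icc t₁ τ, M - 2*ρ ≤ U r x₁ := by
          intro r hr
          rcases lt_or_eq_of_le hr.2 with hrτ | hrτ
          · exact hbelow r hr.1 hrτ
          · rcases eq_or_lt_of_le hτ1 with he | hlt'
            · rw [hrτ, ← he]
              linarith [hρ0, hUt₁]
            · have hca : ContinuousAt (fun q => U q x₁) τ :=
                hUcont.continuousAt (hsecopen.mem_nhds hτsec)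
              have hev : ∀ᶠ q in nhdsWithin τ (Set.Iio τ), M - 2*ρ ≤ U q x₁ := by
                filter_upwards [Ico_mem_nhdsLT_of_mem (Set.mem_Ioc.2 ⟨hlt', le_rfl⟩)] with q hq
                exact hbelow q hq.1 hq.2
              rw [hrτ]
              exact ge_of_tendsto (hca.tendsto.mono_left nhdsWithin_le_nhds) hev
        have hτE : τ ∈ E := ⟨⟨hτ1, hτ2⟩, hnearτ⟩
        have hstepτ := step t₁ τ le_rfl hτ1 hτβ hnearτ
        have hτt₂ : τ = t₂ := by
          by_contra hne2
          have hτlt : τ < t₂ := lt_of_le_of_ne hτ2 hne2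
          have hUτ : M - 2*ρ < U τ x₁ := by
            have h1 : 0 ≤ κ * (τ - t₁) := mul_nonneg hκpos.le (by linarith)
            linarith [hρ0]
          have hca : ContinuousAt (fun q => U q x₁) τ :=
            hUcont.continuousAt (hsecopen.mem_nhds hτsec)
          have hpre : (fun q => U q x₁) ⁻¹' (Set.Ioi (M - 2*ρ)) ∈ nhds τ :=
            hca.preimage_mem_nhds (isOpen_Ioi.mem_nhds hUτ)
          obtain ⟨δ₂, hδ₂, hball₂⟩ := Metric.mem_nhds_iff.1 hpre
          have ht'1 : τ < min (τ + δ₂/2) t₂ := lt_min (by linarith) hτlt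
          have ht'E : min (τ + δ₂/2) t₂ ∈ E := by
            refine ⟨⟨le_trans hτ1 ht'1.le, min_le_right _ _⟩, fun q hq => ?_⟩
            rcases le_or_gt q τ with hqτ | hqτ
            · exact hnearτ q ⟨hq.1, hqτ⟩
            · have hqball : q ∈ Metric.ball τ δ₂ := by
                simp only [Metric.mem_ball, Real.dist_eq, abs_lt]
                have h2 : q ≤ min (τ + δ₂/2) t₂ := hq.2
                have h3 := min_le_left (τ + δ₂/2) t₂
                constructor <;> linarith
              exact (hball₂ hqball).le
          have := le_csSup hEbdd ht'E
          rw [← hτdef] at this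
          linarith [this]
        have h1 : 0 ≤ κ * (τ - t₁) := mul_nonneg hκpos.le (by linarith)
        rw [← hτt₂]
        linarith
    -- contradiction at the exit time
    have hβQhat : (β, x₁) ∈ Qhat := by
      rw [hQhat]
      exact ⟨⟨lt_trans (hsecT t₁ ht₁sec).1 ht₁β, hβT⟩, (hQo _ hp₁Qo).2,
        hseq β x₁ t₁ ht₁β (fun r hr => hIco hr)⟩
    have hβQQ : (β, x₁) ∈ QQ := hQhatQQ hβQhat
    have hUβ : U β x₁ ≤ -ε := hbdry (β, x₁) hβQQ hβsec
    have hlim := hlimsup (β, x₁) ⟨hβQhat, hβsec⟩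
    set lf := (nhdsWithin β (Set.Iio β)) ⊓ Filter.principal {s : ℝ | (s, x₁) ∈ Qo} with hlfdef
    have hlim' : v β x₁ = Filter.limsup (fun s => v s x₁) lf := hlim
    have hlf_le : nhdsWithin β (Set.Ioo t₁ β) ≤ lf := by
      apply le_inf (nhdsWithin_mono β Set.Ioo_subset_Iio_self)
      rw [Filter.le_principal_iff]
      exact Filter.mem_of_superset self_mem_nhdsWithin (fun r hr => hIco ⟨hr.1.le, hr.2⟩)
    have hclos : β ∈ closure (Set.Ioo t₁ β) := by
      rw [closure_Ioo (ne_of_lt ht₁β)]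
      exact ⟨ht₁β.le, le_rfl⟩
    have hne2 : (nhdsWithin β (Set.Ioo t₁ β)).NeBot := mem_closure_iff_nhdsWithin_neBot.1 hclos
    have hlfne : lf.NeBot := hne2.mono hlf_le
    set G := fun r => (M - ρ + φ r) / θ r with hGdef
    clear_value G
    have hGcont : ContinuousAt G β := by
      rw [hGdef]
      apply ContinuousAt.div
      · exact (continuousAt_const.add hφcont.continuousAt)
      · exact hθcont.continuousAt
      · exact (hθpos β).ne'
    have hGtend : Filter.Tendsto G lf (nhds (G β)) :=
      hGcont.tendsto.mono_left (le_trans inf_le_left nhdsWithin_le_nhds)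
    have hev : ∀ᶠ r in lf, G r ≤ v r x₁ := by
      have h1 : Set.Ioo t₁ β ∈ nhdsWithin β (Set.Iio β) :=
        Ioo_mem_nhdsLT_of_mem (Set.mem_Ioc.2 ⟨ht₁β, le_rfl⟩)
      filter_upwards [Filter.mem_inf_of_left h1] with r hr
      have h2 := prop r ⟨hr.1.le, hr.2⟩
      have h3 := hθpos r
      rw [hGdef, div_le_iff₀ h3]
      simp only [hUdef] at h2
      nlinarith
    have hbddv : Filter.IsBoundedUnder (· ≤ ·) lf (fun s => v s x₁) := by
      refine ⟨Mv, ?_⟩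
      rw [Filter.eventually_map]
      filter_upwards [Filter.mem_inf_of_right (Filter.mem_principal_self _)] with r hr
      exact le_trans (le_abs_self _) (hMv (r, x₁) (hQoQQ hr))
    have hcob : Filter.IsCoboundedUnder (· ≤ ·) lf G := hGtend.isCoboundedUnder_le
    have hlimsup_ge : G β ≤ Filter.limsup (fun s => v s x₁) lf := by
      rw [← hGtend.limsup_eq]
      exact Filter.limsup_le_limsup hev hcob hbddv
    rw [← hlim'] at hlimsup_ge
    have h4 := hθpos β
    have h5 : M - ρ + φ β ≤ θ β * v β x₁ := by
      rw [hGdef, div_le_iff₀ h4] at hlimsup_ge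
      nlinarith [hlimsup_ge]
    have h6 : M - ρ ≤ U β x₁ := by simp only [hUdef]; linarith
    linarith [hρM, hM, hε]

  -- conclude
  have hconc : θ t₀ * v t₀ x₀ ≤ Sv + (T - t₀) * Sη := by
    by_contra hcon
    push_neg at hcon
    set ε := (θ t₀ * v t₀ x₀ - (Sv + (T - t₀) * Sη)) / (2 * Real.exp (T - t₀)) with hεdef
    have hεpos : 0 < ε := by
      apply div_pos (by linarith) (by positivity)
    have hmm := Hmain ε hεpos
    have hexp : 0 < Real.exp (T - t₀) := Real.exp_pos _
    have hεE : ε * Real.exp (T - t₀) = (θ t₀ * v t₀ x₀ - (Sv + (T - t₀) * Sη)) / 2 := by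
      rw [hεdef]; field_simp
    rw [hεE] at hmm
    linarith
  have hθt₀ : θ t₀ = Real.exp (cbar * (t₀ - T)) := by rw [hθdef]
  have hkey : v t₀ x₀ ≤ Real.exp (cbar * (T - t₀)) * (Sv + (T - t₀) * Sη) := by
    have h1 : Real.exp (cbar * (T - t₀)) * (θ t₀ * v t₀ x₀)
        ≤ Real.exp (cbar * (T - t₀)) * (Sv + (T - t₀) * Sη) := by
      apply mul_le_mul_of_nonneg_left hconc (Real.exp_pos _).le
    have h2 : Real.exp (cbar * (T - t₀)) * θ t₀ = 1 := by
      rw [hθt₀, ← Real.exp_add]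
      ring_nf
      exact Real.exp_zero
    calc v t₀ x₀ = Real.exp (cbar * (T - t₀)) * θ t₀ * v t₀ x₀ := by rw [h2]; ring
    _ = Real.exp (cbar * (T - t₀)) * (θ t₀ * v t₀ x₀) := by ring
    _ ≤ _ := h1
  have hle : Real.exp (cbar * (T - t₀)) ≤ Real.exp (cbar * T) :=
    Real.exp_le_exp.2 (by nlinarith [ht₀.1])
  calc v t₀ x₀ ≤ Real.exp (cbar * (T - t₀)) * (Sv + (T - t₀) * Sη) := hkey
  _ ≤ Real.exp (cbar * T) * (Sv + (T - t₀) * Sη) := by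
      apply mul_le_mul_of_nonneg_right hle
      have : 0 ≤ (T - t₀) * Sη := mul_nonneg (by linarith [ht₀.2]) hSη0
      linarith
  _ ≤ T * Real.exp (cbar * T) * Sη + Real.exp (cbar * T) * Sv := by
      have h1 : (T - t₀) * Sη ≤ T * Sη := by nlinarith [ht₀.1]
      have h2 : (0:ℝ) < Real.exp (cbar * T) := Real.exp_pos _
      nlinarith
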